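/- For every α, β > 0 and every natural number n, the function x ↦ (∫_x^∞ e^(-α r^β) r^n dr) / ((1/(αβ)) · e^(-α x^β) · x^(n+1-β)) tends to 1 as x → ∞. -/

import Mathlib

open MeasureTheory Filter Set Real Asymptotics Topology

/-- `exp (-α x^β) = o(x^t)` at `atTop` for any `t`, when `α, β > 0`. -/
lemma expRpow_isLittleO (α β : ℝ) (hα : 0 < α) (hβ : 0 < β) (t : ℝ) :
    (fun x : ℝ => Real.exp (-α * x ^ β)) =o[atTop] fun x : ℝ => x ^ t := by
  have h := (isLittleO_exp_neg_mul_rpow_atTop hα (t / β)).comp_tendsto (tendsto_rpow_atTop hβ)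
  refine h.congr' (by rfl) ?_
  filter_upwards [eventually_gt_atTop (0 : ℝ)] with x hx
  simp only [Function.comp]
  rw [← Real.rpow_mul hx.le]
  congr 1
  field_simp

lemma expRpow_tendsto_zero (α β : ℝ) (hα : 0 < α) (hβ : 0 < β) (s : ℝ) :
    Tendsto (fun x : ℝ => Real.exp (-α * x ^ β) * x ^ s) atTop (𝓝 0) := by
  have h := (expRpow_isLittleO α β hα hβ (-s)).mul_isBigO
      (isBigO_refl (fun x : ℝ => x ^ s) atTop)
  have h2 : (fun x : ℝ => Real.exp (-α * x ^ β) * x ^ s) =o[atTop] (fun _ : ℝ => (1 : ℝ)) := by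
    refine h.trans_eventuallyEq ?_
    filter_upwards [eventually_gt_atTop (0 : ℝ)] with x hx
    rw [← Real.rpow_add hx]
    simp
  exact (isLittleO_one_iff ℝ).mp h2

theorem stmt_13 (α β : ℝ) (hα : 0 < α) (hβ : 0 < β) (n : ℕ) :
    Tendsto (fun x : ℝ =>
        (∫ r in Set.Ioi x, Real.exp (-α * r ^ β) * r ^ (n : ℝ)) /
          (1 / (α * β) * Real.exp (-α * x ^ β) * x ^ ((n : ℝ) + 1 - β)))
      atTop (nhds 1) := by
  set f : ℝ → ℝ := fun r => Real.exp (-α * r ^ β) * r ^ (n : ℝ) with hf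
  set c : ℝ := 1 / (α * β) with hc
  set γ : ℝ := (n : ℝ) + 1 - β with hγ
  set d : ℝ := c * γ with hd
  have hαβ : α * β ≠ 0 := by positivity
  -- measurability of f
  have hmeas : Measurable f := by
    simp only [hf]
    measurability
  -- f is o(x^(-2)) at atTop
  have hlo : f =o[atTop] fun x : ℝ => x ^ (-2 : ℝ) := by
    have h := (expRpow_isLittleO α β hα hβ (-2 - n)).mul_isBigO
        (isBigO_refl (fun x : ℝ => x ^ (n : ℝ)) atTop)
    refine h.trans_eventuallyEq ?_
    filter_upwards [eventually_gt_atTop (0 : ℝ)] with x hx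
    rw [← Real.rpow_add hx]
    ring_nf
  -- choose a ≥ 1 beyond which the bound holds
  obtain ⟨a₀, ha₀⟩ := (hlo.bound one_pos).exists_forall_of_atTop
  set a : ℝ := max a₀ 1 with ha
  have ha1 : (1 : ℝ) ≤ a := le_max_right _ _
  have ha0 : (0 : ℝ) < a := lt_of_lt_of_le one_pos ha1
  -- integrability of f on Ioi a
  have hInt : IntegrableOn f (Ioi a) := by
    have hg : IntegrableOn (fun x : ℝ => x ^ (-2 : ℝ)) (Ioi a) :=
      integrableOn_Ioi_rpow_of_lt (by norm_num) ha0
    refine Integrable.mono' hg (hmeas.aestronglyMeasurable.restrict) ?_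
    rw [ae_restrict_iff' measurableSet_Ioi]
    refine ae_of_all _ fun x hx => ?_
    have hxa : a₀ ≤ x := le_trans (le_max_left _ _) (le_of_lt hx)
    have h := ha₀ x hxa
    have hx0 : (0:ℝ) < x := lt_trans ha0 hx
    have : |x ^ (-2 : ℝ)| = x ^ (-2 : ℝ) := abs_of_pos (Real.rpow_pos_of_pos hx0 _)
    simp only [one_mul, Real.norm_eq_abs] at h
    rw [this] at h
    simpa using h
  -- numerator F and denominator G
  set F : ℝ → ℝ := fun x => ∫ r in Set.Ioi x, Real.exp (-α * r ^ β) * r ^ (n : ℝ) with hF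
  set G : ℝ → ℝ := fun x => c * Real.exp (-α * x ^ β) * x ^ γ with hG
  -- F x = ∫_{Ioi a} f - ∫ in a..x f, for x > a
  have hsplit : ∀ x, a < x → F x = (∫ r in Ioi a, f r) - ∫ r in a..x, f r := by
    intro x hx
    have hunion : (∫ r in Ioi a, f r) = (∫ r in Ioc a x, f r) + ∫ r in Ioi x, f r := by
      rw [← setIntegral_union (Ioc_disjoint_Ioi le_rfl) measurableSet_Ioi
        (hInt.mono_set Ioc_subset_Ioi_self) (hInt.mono_set (Ioi_subset_Ioi hx.le)),
        Ioc_union_Ioi_eq_Ioi hx.le]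
    rw [intervalIntegral.integral_of_le hx.le]
    simp only [hF]
    rw [hunion]
    ring
  -- derivative of F
  have hF' : ∀ᶠ x in atTop, HasDerivAt F (-(f x)) x := by
    filter_upwards [eventually_gt_atTop a] with x hx
    have hx0 : 0 < x := lt_trans ha0 hx
    have hii : IntervalIntegrable f volume a x := by
      rw [intervalIntegrable_iff_integrableOn_Ioc_of_le hx.le]
      exact hInt.mono_set Ioc_subset_Ioi_self
    have hcont : ContinuousAt f x := by
      apply ContinuousAt.mul
      · exact Real.continuous_exp.continuousAt.comp
          ((Real.continuousAt_rpow_const x β (Or.inl hx0.ne')).const_mul (-α))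
      · exact Real.continuousAt_rpow_const x (n : ℝ) (Or.inl hx0.ne')
    have hftc := intervalIntegral.integral_hasDerivAt_right hii
      ⟨univ, univ_mem, hmeas.aestronglyMeasurable.restrict⟩ hcont
    have hder : HasDerivAt (fun u => (∫ r in Ioi a, f r) - ∫ r in a..u, f r) (-(f x)) x :=
      hftc.const_sub _
    refine hder.congr_of_eventuallyEq ?_
    filter_upwards [Ioi_mem_nhds hx] with u hu
    exact hsplit u hu
  -- F tends to 0
  have hFtop : Tendsto F atTop (𝓝 0) := by
    have h1 : Tendsto (fun x => ∫ r in a..x, f r) atTop (𝓝 (∫ r in Ioi a, f r)) :=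
      intervalIntegral_tendsto_integral_Ioi a hInt tendsto_id
    have h2 : Tendsto (fun x => (∫ r in Ioi a, f r) - ∫ r in a..x, f r) atTop (𝓝 0) := by
      have := (tendsto_const_nhds (x := (∫ r in Ioi a, f r)) (f := atTop)).sub h1
      simpa using this
    refine h2.congr' ?_
    filter_upwards [eventually_gt_atTop a] with x hx
    exact (hsplit x hx).symm
  -- G tends to 0
  have hGtop : Tendsto G atTop (𝓝 0) := by
    have := (expRpow_tendsto_zero α β hα hβ γ).const_mul c
    simp only [mul_zero] at this
    refine this.congr fun x => by simp only [hG]; ring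
  -- derivative of G
  set G' : ℝ → ℝ := fun x =>
    c * (Real.exp (-α * x ^ β) * (-α * (β * x ^ (β - 1)))) * x ^ γ
      + c * Real.exp (-α * x ^ β) * (γ * x ^ (γ - 1)) with hG'def
  have hG' : ∀ᶠ x in atTop, HasDerivAt G (G' x) x := by
    filter_upwards [eventually_gt_atTop (0 : ℝ)] with x hx
    have h1 : HasDerivAt (fun x : ℝ => x ^ β) (β * x ^ (β - 1)) x :=
      Real.hasDerivAt_rpow_const (Or.inl hx.ne')
    have h2 : HasDerivAt (fun x : ℝ => Real.exp (-α * x ^ β))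
        (Real.exp (-α * x ^ β) * (-α * (β * x ^ (β - 1)))) x := (h1.const_mul (-α)).exp
    have h3 : HasDerivAt (fun x : ℝ => x ^ γ) (γ * x ^ (γ - 1)) x :=
      Real.hasDerivAt_rpow_const (Or.inl hx.ne')
    exact ((h2.const_mul c).mul h3)
  -- algebraic form of G'
  have hG'eq : ∀ x : ℝ, 0 < x →
      G' x = Real.exp (-α * x ^ β) * x ^ ((n : ℝ) - β) * (d - x ^ β) := by
    intro x hx
    have e1 : x ^ (β - 1) * x ^ γ = x ^ (n : ℝ) := by
      rw [← Real.rpow_add hx]; congr 1; simp only [hγ]; ring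
    have e2 : x ^ (γ - 1) = x ^ ((n : ℝ) - β) := by congr 1; simp only [hγ]; ring
    have e3 : x ^ (n : ℝ) = x ^ ((n : ℝ) - β) * x ^ β := by
      rw [← Real.rpow_add hx]; congr 1; ring
    have hcab : c * (α * β) = 1 := by rw [hc]; exact one_div_mul_cancel hαβ
    simp only [hG'def, e2]
    calc c * (Real.exp (-α * x ^ β) * (-α * (β * x ^ (β - 1)))) * x ^ γ
          + c * Real.exp (-α * x ^ β) * (γ * x ^ ((n : ℝ) - β))
        = -(c * (α * β)) * (Real.exp (-α * x ^ β) * (x ^ (β - 1) * x ^ γ))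
          + c * γ * (Real.exp (-α * x ^ β) * x ^ ((n : ℝ) - β)) := by ring
      _ = Real.exp (-α * x ^ β) * x ^ ((n : ℝ) - β) * (d - x ^ β) := by
          rw [hcab, e1, e3]; simp only [hd]; ring
  -- G' ≠ 0 eventually
  have hxbig : ∀ᶠ x in atTop, 0 < x ∧ |d| + 1 ≤ x ^ β := by
    filter_upwards [eventually_gt_atTop (0 : ℝ),
      (tendsto_rpow_atTop hβ).eventually_ge_atTop (|d| + 1)] with x h1 h2
    exact ⟨h1, h2⟩
  have hG'ne : ∀ᶠ x in atTop, G' x ≠ 0 := by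
    filter_upwards [hxbig] with x ⟨hx, hxd⟩
    rw [hG'eq x hx]
    have hdx : d - x ^ β < 0 := by
      have : d ≤ |d| := le_abs_self d
      linarith
    have he : 0 < Real.exp (-α * x ^ β) := Real.exp_pos _
    have hp : 0 < x ^ ((n : ℝ) - β) := Real.rpow_pos_of_pos hx _
    exact (mul_neg_of_pos_of_neg (mul_pos he hp) hdx).ne
  -- the ratio of derivatives tends to 1
  have hdiv : Tendsto (fun x => (-(f x)) / G' x) atTop (𝓝 1) := by
    have hbase : Tendsto (fun y : ℝ => y / (y - d)) atTop (𝓝 1) := by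
      have h1 : Tendsto (fun y : ℝ => 1 + d / (y - d)) atTop (𝓝 1) := by
        have := (tendsto_const_nhds (x := d) (f := atTop)).div_atTop
          (tendsto_atTop_add_const_right atTop (-d) tendsto_id)
        have h2 := (tendsto_const_nhds (x := (1:ℝ)) (f := atTop)).add this
        simpa [sub_eq_add_neg] using h2
      refine h1.congr' ?_
      filter_upwards [eventually_gt_atTop (|d| + 1)] with y hy
      have hyd : y - d ≠ 0 := by
        have hdle : d ≤ |d| := le_abs_self d
        have h0 : 0 < y - d := by linarith
        exact h0.ne'
      field_simp
      ring
    have hcomp : Tendsto (fun x : ℝ => x ^ β / (x ^ β - d)) atTop (𝓝 1) :=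
      hbase.comp (tendsto_rpow_atTop hβ)
    refine hcomp.congr' ?_
    filter_upwards [hxbig] with x ⟨hx, hxd⟩
    have he : (0:ℝ) < Real.exp (-α * x ^ β) := Real.exp_pos _
    have hp : (0:ℝ) < x ^ ((n : ℝ) - β) := Real.rpow_pos_of_pos hx _
    have e3 : x ^ (n : ℝ) = x ^ ((n : ℝ) - β) * x ^ β := by
      rw [← Real.rpow_add hx]; congr 1; ring
    rw [hG'eq x hx]
    simp only [hf, e3]
    rw [div_eq_div_iff]
    · ring
    · have hdx : 0 < x ^ β - d := by
        have : d ≤ |d| := le_abs_self d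
        linarith
      exact hdx.ne'
    · have hdx : d - x ^ β < 0 := by
        have : d ≤ |d| := le_abs_self d
        linarith
      exact (mul_neg_of_pos_of_neg (mul_pos he hp) hdx).ne
  exact HasDerivAt.lhopital_zero_atTop hF' hG' hG'ne hFtop hGtop hdiv
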